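/- arXiv:1803.03034 — 2 statements merged into one kernel-verified Lean document; each statement's English description precedes it below -/
import Mathlib

section
/- Let V be a real inner product space, W ⊆ V a subspace admitting an orthogonal projection onto it, p, q positive integers, and J : V → V a symmetric linear map with J² = pJ + qI. Then for every X ∈ W: T²X + t(NX) = pTX + qX and N(TX) + n(NX) = pNX. -/
open scoped RealInnerProductSpace

/-- The tangential part of `J X` with respect to the subspace `W`:
`T X := P_W (J X)` (also used for `t U := P_W (J U)` when `U ∈ Wᗮ`). -/
noncomputable def tang {V : Type*} [NormedAddCommGroup V] [InnerProductSpace ℝ V]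
    (W : Submodule ℝ V) [Submodule.HasOrthogonalProjection W] (J : V →ₗ[ℝ] V) (X : V) : V :=
  (W.orthogonalProjectionOnto (J X) : V)

/-- The normal part of `J X` with respect to the subspace `W`:
`N X := J X − T X` (also used for `n U := J U − t U` when `U ∈ Wᗮ`). -/
noncomputable def norm' {V : Type*} [NormedAddCommGroup V] [InnerProductSpace ℝ V]
    (W : Submodule ℝ V) [Submodule.HasOrthogonalProjection W] (J : V →ₗ[ℝ] V) (X : V) : V :=
  J X - tang W J X


/-- For a symmetric metallic structure `J` (`J² = pJ + qI`) and a subspace `W`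
with an orthogonal projection, for every `X ∈ W`:
`T²X + t(NX) = pTX + qX` and `N(TX) + n(NX) = pNX`. -/
theorem induced_structure_identities_tangent {V : Type*} [NormedAddCommGroup V]
    [InnerProductSpace ℝ V]
    (W : Submodule ℝ V) [Submodule.HasOrthogonalProjection W]
    (p q : ℕ) (hp : 0 < p) (hq : 0 < q)
    (J : V →ₗ[ℝ] V)
    (hJsym : ∀ x y : V, ⟪J x, y⟫ = ⟪x, J y⟫)
    (hJ2 : ∀ v : V, J (J v) = (p : ℝ) • J v + (q : ℝ) • v) :
    ∀ X ∈ W,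
      tang W J (tang W J X) + tang W J (norm' W J X) = (p : ℝ) • tang W J X + (q : ℝ) • X ∧
      norm' W J (tang W J X) + norm' W J (norm' W J X) = (p : ℝ) • norm' W J X := by
  intro X hX
  set a := tang W J X with ha
  set b := norm' W J X with hb
  have hab : b = J X - a := rfl
  have hsum : J a + J b = (p : ℝ) • J X + (q : ℝ) • X := by
    rw [← map_add, hab]
    rw [show a + (J X - a) = J X by abel, hJ2 X]
  have htang : tang W J a + tang W J b = (p : ℝ) • a + (q : ℝ) • X := by
    simp only [tang]
    rw [← Submodule.coe_add, ← map_add, hsum, map_add, map_smul, map_smul]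
    push_cast
    rw [show ((W.orthogonalProjectionOnto X : W) : V) = X from
      congrArg Subtype.val (W.orthogonalProjectionOnto_mem_subspace_eq_self ⟨X, hX⟩)]
    rfl
  refine ⟨htang, ?_⟩
  show J a - tang W J a + (J b - tang W J b) = (p : ℝ) • b
  rw [sub_add_sub_comm, hsum, htang, hab]
  module
end

section
/- Let V be a real inner product space, p, q positive integers, J : V → V a symmetric linear map with J² = pJ + qI, and W = D₁ ⊕ D₂ a subspace admitting an orthogonal projection onto it, where D₁ and D₂ are mutually orthogonal subspaces. Suppose ⟨JX, Y⟩ = 0 for all X ∈ D₁ and Y ∈ D₂, and suppose there is θ ∈ [0, π/2] such that ‖TX‖ = cos θ·‖JX‖ for every X ∈ D₁ and for every X ∈ D₂ (i.e. D₁ and D₂ are slant with the same slant angle θ). Then W is slant with slant angle θ: ‖TX‖ = cos θ·‖JX‖ for every X ∈ W. -/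
open scoped RealInnerProductSpace

/-- If `W = D₁ ⊕ D₂` with `D₁ ⊥ D₂`, `⟨JX, Y⟩ = 0` for `X ∈ D₁`, `Y ∈ D₂`,
and both `D₁` and `D₂` are slant with the same slant angle `θ` with respect to a symmetric
metallic structure `J`, then `W` is slant with slant angle `θ`. -/
theorem bislant_equal_angles_is_slant {V : Type*} [NormedAddCommGroup V]
    [InnerProductSpace ℝ V]
    (p q : ℕ) (hp : 0 < p) (hq : 0 < q)
    (J : V →ₗ[ℝ] V)
    (hJsym : ∀ x y : V, ⟪J x, y⟫ = ⟪x, J y⟫)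
    (hJ2 : ∀ v : V, J (J v) = (p : ℝ) • J v + (q : ℝ) • v)
    (D₁ D₂ W : Submodule ℝ V) [Submodule.HasOrthogonalProjection W]
    (horth : ∀ x ∈ D₁, ∀ y ∈ D₂, ⟪x, y⟫ = 0)
    (hW : W = D₁ ⊔ D₂)
    (hJorth : ∀ X ∈ D₁, ∀ Y ∈ D₂, ⟪J X, Y⟫ = 0)
    (θ : ℝ) (hθ : θ ∈ Set.Icc 0 (Real.pi / 2))
    (hslant₁ : ∀ X ∈ D₁, ‖tang W J X‖ = Real.cos θ * ‖J X‖)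
    (hslant₂ : ∀ X ∈ D₂, ‖tang W J X‖ = Real.cos θ * ‖J X‖) :
    ∀ X ∈ W, ‖tang W J X‖ = Real.cos θ * ‖J X‖ := by
  have hcos : 0 ≤ Real.cos θ := by
    apply Real.cos_nonneg_of_mem_Icc
    constructor
    · have := hθ.1; have := Real.pi_pos; linarith
    · exact hθ.2
  have hD1W : D₁ ≤ W := by rw [hW]; exact le_sup_left
  have hD2W : D₂ ≤ W := by rw [hW]; exact le_sup_right
  -- projection identity: for w ∈ W, ⟪tang v, w⟫ = ⟪J v, w⟫
  have h1 : ∀ v w : V, w ∈ W → ⟪tang W J v, w⟫ = ⟪J v, w⟫ := by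
    intro v w hw
    have h : ⟪J v - (W.orthogonalProjectionOnto (J v) : V), w⟫ = 0 :=
      W.starProjection_inner_eq_zero (J v) w hw
    rw [inner_sub_left] at h
    simp only [tang]
    linarith
  -- J D₁ ⊥ J D₂
  have hJJ : ∀ X ∈ D₁, ∀ Y ∈ D₂, ⟪J X, J Y⟫ = 0 := by
    intro X hX Y hY
    have h := hJsym (J X) Y
    rw [hJ2 X, inner_add_left, real_inner_smul_left, real_inner_smul_left,
      hJorth X hX Y hY, horth X hX Y hY] at h
    rw [← h]; ring
  -- cross term of tangential parts vanishes
  have hcross : ∀ x₁ ∈ D₁, ∀ x₂ ∈ D₂, ⟪tang W J x₁, tang W J x₂⟫ = 0 := by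
    intro x₁ hx₁ x₂ hx₂
    have hT₁W : tang W J x₁ ∈ W := (W.orthogonalProjectionOnto (J x₁)).2
    have hT₂W : tang W J x₂ ∈ W := (W.orthogonalProjectionOnto (J x₂)).2
    have hT₁W' : tang W J x₁ ∈ D₁ ⊔ D₂ := by rw [← hW]; exact hT₁W
    have hT₂W' : tang W J x₂ ∈ D₁ ⊔ D₂ := by rw [← hW]; exact hT₂W
    rcases Submodule.mem_sup.mp hT₁W' with ⟨a₁, ha₁, a₂, ha₂, hA⟩
    rcases Submodule.mem_sup.mp hT₂W' with ⟨b₁, hb₁, b₂, hb₂, hB⟩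
    have hJx₂a₁ : ⟪J x₂, a₁⟫ = 0 := by
      rw [hJsym, real_inner_comm]; exact hJorth a₁ ha₁ x₂ hx₂
    have hb₁a₂ : ⟪b₁, a₂⟫ = 0 := horth b₁ hb₁ a₂ ha₂
    have ha₂b₁ : ⟪a₂, b₁⟫ = 0 := by rw [real_inner_comm]; exact hb₁a₂
    have ha₁b₂ : ⟪a₁, b₂⟫ = 0 := horth a₁ ha₁ b₂ hb₂
    have eA : ⟪tang W J x₁, tang W J x₂⟫ = ⟪a₂, b₂⟫ := by
      calc ⟪tang W J x₁, tang W J x₂⟫ = ⟪tang W J x₂, tang W J x₁⟫ := real_inner_comm _ _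
        _ = ⟪J x₂, tang W J x₁⟫ := h1 x₂ _ hT₁W
        _ = ⟪J x₂, a₁ + a₂⟫ := by rw [hA]
        _ = ⟪J x₂, a₁⟫ + ⟪J x₂, a₂⟫ := inner_add_right _ _ _
        _ = ⟪J x₂, a₂⟫ := by rw [hJx₂a₁]; ring
        _ = ⟪tang W J x₂, a₂⟫ := (h1 x₂ a₂ (hD2W ha₂)).symm
        _ = ⟪b₁ + b₂, a₂⟫ := by rw [hB]
        _ = ⟪b₁, a₂⟫ + ⟪b₂, a₂⟫ := inner_add_left _ _ _
        _ = ⟪b₂, a₂⟫ := by rw [hb₁a₂]; ring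
        _ = ⟪a₂, b₂⟫ := real_inner_comm _ _
    have eB : ⟪tang W J x₁, tang W J x₂⟫ = ⟪a₁, b₁⟫ := by
      calc ⟪tang W J x₁, tang W J x₂⟫ = ⟪J x₁, tang W J x₂⟫ := h1 x₁ _ hT₂W
        _ = ⟪J x₁, b₁ + b₂⟫ := by rw [hB]
        _ = ⟪J x₁, b₁⟫ + ⟪J x₁, b₂⟫ := inner_add_right _ _ _
        _ = ⟪J x₁, b₁⟫ := by rw [hJorth x₁ hx₁ b₂ hb₂]; ring
        _ = ⟪tang W J x₁, b₁⟫ := (h1 x₁ b₁ (hD1W hb₁)).symm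
        _ = ⟪a₁ + a₂, b₁⟫ := by rw [hA]
        _ = ⟪a₁, b₁⟫ + ⟪a₂, b₁⟫ := inner_add_left _ _ _
        _ = ⟪a₁, b₁⟫ := by rw [ha₂b₁]; ring
    have eC : ⟪tang W J x₁, tang W J x₂⟫ = ⟪a₁, b₁⟫ + ⟪a₂, b₂⟫ := by
      rw [← hA, ← hB, inner_add_left, inner_add_right, inner_add_right,
        ha₁b₂, ha₂b₁]
      ring
    linarith
  intro X hX
  rw [hW] at hX
  rcases Submodule.mem_sup.mp hX with ⟨x₁, hx₁, x₂, hx₂, rfl⟩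
  have hT : tang W J (x₁ + x₂) = tang W J x₁ + tang W J x₂ := by
    simp [tang, map_add]
  have e1 : ‖tang W J (x₁ + x₂)‖ ^ 2 = ‖tang W J x₁‖ ^ 2 + ‖tang W J x₂‖ ^ 2 := by
    rw [hT, norm_add_sq_real, hcross x₁ hx₁ x₂ hx₂]; ring
  have e2 : ‖J (x₁ + x₂)‖ ^ 2 = ‖J x₁‖ ^ 2 + ‖J x₂‖ ^ 2 := by
    rw [map_add, norm_add_sq_real, hJJ x₁ hx₁ x₂ hx₂]; ring
  have e3 : ‖tang W J (x₁ + x₂)‖ ^ 2 = (Real.cos θ * ‖J (x₁ + x₂)‖) ^ 2 := by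
    rw [e1, hslant₁ x₁ hx₁, hslant₂ x₂ hx₂, mul_pow, mul_pow, mul_pow, e2]; ring
  calc ‖tang W J (x₁ + x₂)‖ = Real.sqrt (‖tang W J (x₁ + x₂)‖ ^ 2) :=
        (Real.sqrt_sq (norm_nonneg _)).symm
    _ = Real.sqrt ((Real.cos θ * ‖J (x₁ + x₂)‖) ^ 2) := by rw [e3]
    _ = Real.cos θ * ‖J (x₁ + x₂)‖ :=
        Real.sqrt_sq (mul_nonneg hcos (norm_nonneg _))
end
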